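/- For every normal default theory (D,W) with W consistent and finite there exists a prerequisite-free normal default theory (D', ∅) (with empty objective part) that is equivalent to (D,W), i.e., ext(D', ∅) = ext(D,W). -/

import Mathlib

/-- Propositional formulas over a set of atoms `α`. -/
inductive PropForm (α : Type) : Type
  | atom : α → PropForm α
  | fls  : PropForm α
  | impl : PropForm α → PropForm α → PropForm α

namespace PropForm

/-- Negation `¬φ`, definable as `φ → ⊥`. -/
def neg {α : Type} (φ : PropForm α) : PropForm α := impl φ fls

/-- Conjunction, definable from implication and falsum. -/
def conj {α : Type} (φ ψ : PropForm α) : PropForm α := (φ.impl ψ.neg).neg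

/-- Biimplication `φ ↔ ψ`. -/
def biimp {α : Type} (φ ψ : PropForm α) : PropForm α := conj (φ.impl ψ) (ψ.impl φ)

/-- Evaluation of a formula under a valuation of the atoms. -/
def eval {α : Type} (v : α → Prop) : PropForm α → Prop
  | atom a   => v a
  | fls      => False
  | impl φ ψ => eval v φ → eval v ψ

/-- Renaming/embedding of atoms. -/
def map {α β : Type} (f : α → β) : PropForm α → PropForm β
  | atom a   => atom (f a)
  | fls      => fls
  | impl φ ψ => impl (map f φ) (map f ψ)

end PropForm

/-- Classical propositional consequence operator. -/
def Cn {α : Type} (S : Set (PropForm α)) : Set (PropForm α) :=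
  {φ | ∀ v : α → Prop, (∀ ψ ∈ S, ψ.eval v) → φ.eval v}

/-- A theory: a set of formulas closed under propositional consequence. -/
def IsTheory {α : Type} (S : Set (PropForm α)) : Prop := Cn S ⊆ S

/-- A set of formulas is consistent if its consequences are not the whole language. -/
def Consistent {α : Type} (S : Set (PropForm α)) : Prop := Cn S ≠ Set.univ

/-- A default `α : Γ / β` with prerequisite, finite set of justifications, consequent. -/
structure Default (α : Type) where
  pre : PropForm α
  jus : Finset (PropForm α)
  con : PropForm α

/-- A default is applicable w.r.t. `S` if no justification's negation follows from `S`. -/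
def Default.Applicable {α : Type} (S : Set (PropForm α)) (d : Default α) : Prop :=
  ∀ γ ∈ d.jus, γ.neg ∉ Cn S

/-- The reduct of `D` w.r.t. `S`: the monotone rules `pre/con` of `S`-applicable defaults. -/
def Reduct {α : Type} (D : Set (Default α)) (S : Set (PropForm α)) :
    Set (PropForm α × PropForm α) :=
  {r | ∃ d ∈ D, d.Applicable S ∧ r = (d.pre, d.con)}

/-- `Cn^B(W)`: consequences of `W` in propositional calculus augmented with rules `B`;
the least set containing `W`, closed under `Cn`, and closed under the rules of `B`. -/
def CnRules {α : Type} (B : Set (PropForm α × PropForm α)) (W : Set (PropForm α)) :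
    Set (PropForm α) :=
  ⋂₀ {S | W ⊆ S ∧ Cn S ⊆ S ∧ ∀ r ∈ B, r.1 ∈ S → r.2 ∈ S}

/-- `S` is an extension of the default theory `(D, W)`. -/
def IsExtension {α : Type} (D : Set (Default α)) (W S : Set (PropForm α)) : Prop :=
  S = CnRules (Reduct D S) W

/-- The family of all extensions of `(D, W)`. -/
def ext {α : Type} (D : Set (Default α)) (W : Set (PropForm α)) : Set (Set (PropForm α)) :=
  {S | IsExtension D W S}

/-- A default is prerequisite-free if its prerequisite is a tautology. -/
def Default.PrereqFree {α : Type} (d : Default α) : Prop :=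
  d.pre ∈ Cn (∅ : Set (PropForm α))

/-- A default is normal if it has the form `α : {β} / β`. -/
def Default.Normal {α : Type} (d : Default α) : Prop := d.jus = {d.con}

section Basics

open PropForm

variable {α : Type}

/-- Satisfiability. -/
def Sat (X : Set (PropForm α)) : Prop := ∃ v : α → Prop, ∀ φ ∈ X, φ.eval v

lemma eval_neg (v : α → Prop) (φ : PropForm α) : φ.neg.eval v ↔ ¬ φ.eval v := Iff.rfl

lemma eval_conj (v : α → Prop) (φ ψ : PropForm α) :
    (φ.conj ψ).eval v ↔ φ.eval v ∧ ψ.eval v := by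
  simp only [PropForm.conj, PropForm.neg, PropForm.eval]
  tauto

lemma mem_Cn_self {X : Set (PropForm α)} {φ : PropForm α} (h : φ ∈ X) : φ ∈ Cn X :=
  fun _ hv => hv φ h

lemma subset_Cn (X : Set (PropForm α)) : X ⊆ Cn X := fun _ h => mem_Cn_self h

lemma Cn_mono {X Y : Set (PropForm α)} (h : X ⊆ Y) : Cn X ⊆ Cn Y :=
  fun _ hφ v hv => hφ v (fun ψ hψ => hv ψ (h hψ))

lemma Cn_Cn (X : Set (PropForm α)) : Cn (Cn X) = Cn X := by
  apply Set.Subset.antisymm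
  · intro φ hφ v hv
    exact hφ v (fun ψ hψ => hψ v hv)
  · exact subset_Cn _

lemma Sat_mono {X Y : Set (PropForm α)} (h : Y ⊆ X) (hX : Sat X) : Sat Y := by
  obtain ⟨v, hv⟩ := hX; exact ⟨v, fun φ hφ => hv φ (h hφ)⟩

lemma Sat_Cn {X : Set (PropForm α)} (h : Sat X) : Sat (Cn X) := by
  obtain ⟨v, hv⟩ := h; exact ⟨v, fun φ hφ => hφ v hv⟩

lemma Cn_eq_univ_iff {X : Set (PropForm α)} : Cn X = Set.univ ↔ ¬ Sat X := by
  constructor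
  · intro h ⟨v, hv⟩
    have : PropForm.fls ∈ Cn X := h ▸ Set.mem_univ _
    exact this v hv
  · intro h
    apply Set.eq_univ_of_forall
    intro φ v hv
    exact absurd ⟨v, hv⟩ h

lemma Consistent_iff_Sat {X : Set (PropForm α)} : Consistent X ↔ Sat X := by
  rw [Consistent, Ne, Cn_eq_univ_iff, not_not]

lemma neg_mem_Cn_iff {X : Set (PropForm α)} {φ : PropForm α} :
    φ.neg ∈ Cn X ↔ ¬ Sat (X ∪ {φ}) := by
  constructor
  · rintro h ⟨v, hv⟩
    exact h v (fun ψ hψ => hv ψ (Set.mem_union_left _ hψ)) (hv φ (by simp))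
  · intro h v hv hφ
    exact h ⟨v, by rintro ψ (hψ | rfl); exacts [hv ψ hψ, hφ]⟩

lemma neg_notMem_Cn_iff {X : Set (PropForm α)} {φ : PropForm α} :
    φ.neg ∉ Cn X ↔ Sat (X ∪ {φ}) := by
  rw [neg_mem_Cn_iff, not_not]

lemma conj_mem_Cn {X : Set (PropForm α)} {φ ψ : PropForm α}
    (h1 : φ ∈ Cn X) (h2 : ψ ∈ Cn X) : φ.conj ψ ∈ Cn X := by
  intro v hv
  exact (eval_conj v φ ψ).2 ⟨h1 v hv, h2 v hv⟩

end Basics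

section Countable

open PropForm

variable {α : Type} [Denumerable α]

private def pfEnc : PropForm α → ℕ
  | .atom a => Nat.pair 0 (Encodable.encode a)
  | .fls => Nat.pair 1 0
  | .impl φ ψ => Nat.pair 2 (Nat.pair (pfEnc φ) (pfEnc ψ))

private lemma pfEnc_inj : Function.Injective (pfEnc (α := α)) := by
  intro x
  induction x with
  | atom a => intro y hy; cases y <;> simp_all [pfEnc, Nat.pair_eq_pair]
  | fls => intro y hy; cases y <;> simp [pfEnc, Nat.pair_eq_pair] at hy ⊢
  | impl φ ψ ih1 ih2 =>
      intro y hy; cases y <;> simp [pfEnc, Nat.pair_eq_pair] at hy ⊢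
      exact ⟨ih1 hy.1, ih2 hy.2⟩

instance : Countable (PropForm α) := ⟨pfEnc, pfEnc_inj⟩

instance : Countable (Default α) := by
  have : Function.Injective (fun d : Default α => (d.pre, d.jus, d.con)) := by
    rintro ⟨a, b, c⟩ ⟨a', b', c'⟩ h
    simp only [Prod.mk.injEq] at h
    simp [h.1, h.2.1, h.2.2]
  exact this.countable

end Countable
section Compactness

open PropForm

variable {α : Type} [Denumerable α]

instance : Nonempty (PropForm α) := ⟨PropForm.fls⟩

attribute [local instance] Classical.propDecidable

/-- Finite satisfiability. -/
def FinSat (X : Set (PropForm α)) : Prop := ∀ Y ⊆ X, Y.Finite → Sat Y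

lemma FinSat_mono {X Y : Set (PropForm α)} (h : Y ⊆ X) (hX : FinSat X) : FinSat Y :=
  fun Z hZ hfin => hX Z (hZ.trans h) hfin

lemma finite_subset_iUnion_mono {U : ℕ → Set (PropForm α)} (hmono : Monotone U)
    {Y : Set (PropForm α)} (hY : Y.Finite) (hsub : Y ⊆ ⋃ n, U n) : ∃ N, Y ⊆ U N := by
  classical
  haveI := hY.to_subtype
  choose g hg using fun y : Y => Set.mem_iUnion.1 (hsub y.2)
  have hrfin : (Set.range g).Finite := Set.finite_range g
  obtain ⟨N, hN⟩ := hrfin.bddAbove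
  refine ⟨N, fun x hx => hmono (hN (Set.mem_range_self ⟨x, hx⟩)) (hg ⟨x, hx⟩)⟩

private noncomputable def lind (X : Set (PropForm α)) (f : ℕ → PropForm α) : ℕ → Set (PropForm α)
  | 0 => X
  | n + 1 =>
      let T := lind X f n
      if FinSat (T ∪ {f n}) then T ∪ {f n} else T ∪ {(f n).neg}

private lemma lind_succ (X : Set (PropForm α)) (f : ℕ → PropForm α) (n : ℕ) :
    lind X f (n + 1) = if FinSat (lind X f n ∪ {f n}) then lind X f n ∪ {f n}
      else lind X f n ∪ {(f n).neg} := rfl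

private lemma lind_mono {X : Set (PropForm α)} {f : ℕ → PropForm α} :
    Monotone (lind X f) := by
  apply monotone_nat_of_le_succ
  intro n
  rw [lind_succ]
  by_cases h : FinSat (lind X f n ∪ {f n})
  · rw [if_pos h]; exact Set.subset_union_left
  · rw [if_neg h]; exact Set.subset_union_left

private lemma lind_finSat {X : Set (PropForm α)} {f : ℕ → PropForm α} (hX : FinSat X) :
    ∀ n, FinSat (lind X f n) := by
  intro n
  induction n with
  | zero => exact hX
  | succ n ih =>
      rw [lind_succ]
      by_cases h : FinSat (lind X f n ∪ {f n})
      · rwa [if_pos h]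
      · rw [if_neg h]
        -- show FinSat (T ∪ {¬ f n})
        intro Y hY hfin
        by_contra hns
        -- from h : some finite Y1 ⊆ T ∪ {f n} unsat
        rw [FinSat] at h
        push_neg at h
        obtain ⟨Y1, hY1sub, hY1fin, hY1ns⟩ := h
        have key : Sat ((Y1 \ {f n}) ∪ (Y \ {(f n).neg})) := by
          apply ih _ _ (hY1fin.diff.union hfin.diff)
          rintro x (⟨hx, hxn⟩ | ⟨hx, hxn⟩)
          · rcases hY1sub hx with h' | h'
            · exact h'
            · exact absurd h' hxn
          · rcases hY hx with h' | h'
            · exact h'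
            · exact absurd h' hxn
        obtain ⟨v, hv⟩ := key
        by_cases hfv : (f n).eval v
        · apply hY1ns
          refine ⟨v, fun φ hφ => ?_⟩
          by_cases hφn : φ = f n
          · exact hφn ▸ hfv
          · exact hv φ (Set.mem_union_left _ ⟨hφ, hφn⟩)
        · apply hns
          refine ⟨v, fun φ hφ => ?_⟩
          by_cases hφn : φ = (f n).neg
          · exact hφn ▸ hfv
          · exact hv φ (Set.mem_union_right _ ⟨hφ, hφn⟩)

private lemma lind_complete {X : Set (PropForm α)} {f : ℕ → PropForm α}
    (hf : Function.Surjective f) (φ : PropForm α) :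
    φ ∈ (⋃ n, lind X f n) ∨ φ.neg ∈ (⋃ n, lind X f n) := by
  obtain ⟨n, rfl⟩ := hf φ
  by_cases h : FinSat (lind X f n ∪ {f n})
  · left
    exact Set.mem_iUnion.2 ⟨n + 1, by rw [lind_succ, if_pos h]; exact Set.mem_union_right _ rfl⟩
  · right
    exact Set.mem_iUnion.2 ⟨n + 1, by rw [lind_succ, if_neg h]; exact Set.mem_union_right _ rfl⟩

theorem compactness {X : Set (PropForm α)} (h : FinSat X) : Sat X := by
  obtain ⟨f, hf⟩ := exists_surjective_nat (PropForm α)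
  set T := ⋃ n, lind X f n with hT
  have hTfs : FinSat T := by
    intro Y hY hfin
    obtain ⟨N, hN⟩ := finite_subset_iUnion_mono lind_mono hfin hY
    exact lind_finSat h N Y hN hfin
  have hnotboth : ∀ φ : PropForm α, ¬ (φ ∈ T ∧ φ.neg ∈ T) := by
    rintro φ ⟨h1, h2⟩
    obtain ⟨v, hv⟩ := hTfs {φ, φ.neg} (by rintro x (rfl | rfl) <;> assumption)
      ((Set.finite_singleton _).insert _)
    exact hv φ.neg (by simp) (hv φ (by simp))
  set v : α → Prop := fun a => PropForm.atom a ∈ T with hv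
  have main : ∀ φ : PropForm α, φ ∈ T ↔ φ.eval v := by
    intro φ
    induction φ with
    | atom a => exact Iff.rfl
    | fls =>
        simp only [PropForm.eval]
        constructor
        · intro hmem
          obtain ⟨u, hu⟩ := hTfs {PropForm.fls} (by simpa) (Set.finite_singleton _)
          exact hu PropForm.fls rfl
        · exact False.elim
    | impl φ ψ ih1 ih2 =>
        constructor
        · intro hmem
          simp only [PropForm.eval]
          intro hφ
          rw [← ih2]
          rcases lind_complete hf ψ with h' | h'
          · exact h'
          · exfalso
            obtain ⟨u, hu⟩ := hTfs {PropForm.impl φ ψ, φ, ψ.neg}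
              (by rintro x (rfl | rfl | rfl) <;> first | assumption | exact ih1.2 hφ)
              (Set.Finite.insert _ ((Set.finite_singleton _).insert _))
            exact hu ψ.neg (by simp) (hu (PropForm.impl φ ψ) (by simp) (hu φ (by simp)))
        · intro heval
          rcases lind_complete hf (PropForm.impl φ ψ) with h' | h'
          · exact h'
          · exfalso
            simp only [PropForm.eval] at heval
            rcases lind_complete hf φ with hφ | hφ
            · have hψ : ψ ∈ T := ih2.2 (heval (ih1.1 hφ))
              obtain ⟨u, hu⟩ := hTfs {(PropForm.impl φ ψ).neg, φ, ψ}
                (by rintro x (rfl | rfl | rfl) <;> assumption)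
                (Set.Finite.insert _ ((Set.finite_singleton _).insert _))
              have := hu (PropForm.impl φ ψ).neg (by simp)
              exact this (fun _ => hu ψ (by simp))
            · obtain ⟨u, hu⟩ := hTfs {(PropForm.impl φ ψ).neg, φ.neg}
                (by rintro x (rfl | rfl) <;> assumption)
                ((Set.finite_singleton _).insert _)
              have h1 := hu (PropForm.impl φ ψ).neg (by simp)
              have h2 := hu φ.neg (by simp)
              exact h1 (fun hφu => absurd hφu h2)
  refine ⟨v, fun φ hφ => (main φ).1 ?_⟩
  exact Set.mem_iUnion.2 ⟨0, hφ⟩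

theorem mem_Cn_finite {X : Set (PropForm α)} {φ : PropForm α} (h : φ ∈ Cn X) :
    ∃ X0 ⊆ X, X0.Finite ∧ φ ∈ Cn X0 := by
  by_contra hc
  push_neg at hc
  have hfs : FinSat (X ∪ {φ.neg}) := by
    intro Y hY hfin
    have hX0 : (Y \ {φ.neg}) ⊆ X := by
      rintro x ⟨hx, hxn⟩
      rcases hY hx with h' | h'
      · exact h'
      · exact absurd h' hxn
    have := hc (Y \ {φ.neg}) hX0 hfin.diff
    simp only [Cn, Set.mem_setOf_eq] at this
    push_neg at this
    obtain ⟨v, hv, hnφ⟩ := this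
    refine ⟨v, fun ψ hψ => ?_⟩
    by_cases hψn : ψ = φ.neg
    · exact hψn ▸ hnφ
    · exact hv ψ ⟨hψ, hψn⟩
  obtain ⟨v, hv⟩ := compactness hfs
  exact hv φ.neg (Set.mem_union_right _ rfl) (h v (fun ψ hψ => hv ψ (Set.mem_union_left _ hψ)))

end Compactness
section Rules

open PropForm

variable {α : Type}

/-- The defining family for `CnRules`. -/
def RuleClosed (B : Set (PropForm α × PropForm α)) (W : Set (PropForm α))
    (S : Set (PropForm α)) : Prop :=
  W ⊆ S ∧ Cn S ⊆ S ∧ ∀ r ∈ B, r.1 ∈ S → r.2 ∈ S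

lemma CnRules_eq (B : Set (PropForm α × PropForm α)) (W : Set (PropForm α)) :
    CnRules B W = ⋂₀ {S | RuleClosed B W S} := rfl

lemma CnRules_subset {B : Set (PropForm α × PropForm α)} {W S : Set (PropForm α)}
    (h : RuleClosed B W S) : CnRules B W ⊆ S :=
  fun _ hφ => hφ S h

lemma ruleClosed_CnRules (B : Set (PropForm α × PropForm α)) (W : Set (PropForm α)) :
    RuleClosed B W (CnRules B W) := by
  refine ⟨?_, ?_, ?_⟩
  · intro φ hφ S hS; exact hS.1 hφ
  · intro φ hφ S hS
    exact hS.2.1 (Cn_mono (CnRules_subset hS) hφ)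
  · intro r hr h1 S hS
    exact hS.2.2 r hr (h1 S hS)

lemma W_subset_CnRules (B : Set (PropForm α × PropForm α)) (W : Set (PropForm α)) :
    W ⊆ CnRules B W := (ruleClosed_CnRules B W).1

lemma Cn_subset_CnRules (B : Set (PropForm α × PropForm α)) (W : Set (PropForm α)) :
    Cn (CnRules B W) ⊆ CnRules B W := (ruleClosed_CnRules B W).2.1

lemma CnW_subset_CnRules (B : Set (PropForm α × PropForm α)) (W : Set (PropForm α)) :
    Cn W ⊆ CnRules B W :=
  fun _ hφ => Cn_subset_CnRules B W (Cn_mono (W_subset_CnRules B W) hφ)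

-- basic facts about extensions
variable {D : Set (Default α)} {W : Set (PropForm α)}

lemma extension_cnClosed {S : Set (PropForm α)} (h : IsExtension D W S) : Cn S ⊆ S := by
  conv_rhs => rw [h]
  intro φ hφ
  exact Cn_subset_CnRules _ _ (by rw [← h]; exact hφ)

lemma extension_W_subset {S : Set (PropForm α)} (h : IsExtension D W S) : W ⊆ S := by
  rw [h]; exact W_subset_CnRules _ _

lemma extension_Cn_eq {S : Set (PropForm α)} (h : IsExtension D W S) : Cn S = S :=
  Set.Subset.antisymm (extension_cnClosed h) (subset_Cn S)

lemma extension_rule_closed {S : Set (PropForm α)} (h : IsExtension D W S)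
    {d : Default α} (hd : d ∈ D) (happ : d.Applicable S) (hpre : d.pre ∈ S) :
    d.con ∈ S := by
  have hmem : (d.pre, d.con) ∈ Reduct D S := ⟨d, hd, happ, rfl⟩
  have h1 : d.pre ∈ CnRules (Reduct D S) W := by rw [← h]; exact hpre
  have h2 := (ruleClosed_CnRules (Reduct D S) W).2.2 _ hmem h1
  rw [h]; exact h2

/-- Extensions of a normal default theory with satisfiable `W` are satisfiable. -/
lemma extension_sat (hD : ∀ d ∈ D, d.Normal) (hW : Sat W) {S : Set (PropForm α)}
    (h : IsExtension D W S) : Sat S := by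
  by_contra hns
  have hCnS : Cn S = Set.univ := Cn_eq_univ_iff.2 hns
  have hred : Reduct D S = ∅ := by
    ext r
    simp only [Reduct, Set.mem_setOf_eq, Set.mem_empty_iff_false, iff_false]
    rintro ⟨d, hd, happ, rfl⟩
    have := happ d.con (by rw [hD d hd]; exact Finset.mem_singleton_self _)
    rw [hCnS] at this
    exact this (Set.mem_univ _)
  have : S = Cn W := by
    rw [h, hred]
    apply Set.Subset.antisymm
    · exact CnRules_subset ⟨subset_Cn W, (Cn_Cn W).le, by simp⟩
    · exact CnW_subset_CnRules _ _
  exact hns (this ▸ Sat_Cn hW)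

end Rules

section ConjList

open PropForm

variable {α : Type}

/-- Conjunction of a list of formulas. -/
def conjList : List (PropForm α) → PropForm α
  | [] => PropForm.fls.impl PropForm.fls
  | φ :: l => φ.conj (conjList l)

lemma eval_conjList (v : α → Prop) (l : List (PropForm α)) :
    (conjList l).eval v ↔ ∀ φ ∈ l, φ.eval v := by
  induction l with
  | nil => simp [conjList, PropForm.eval]
  | cons φ l ih => simp [conjList, eval_conj, ih]

end ConjList
section Chain

open PropForm

attribute [local instance] Classical.propDecidable

variable {α : Type}

/-- A tautology. -/
def taut : PropForm α := PropForm.fls.impl PropForm.fls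

lemma eval_taut (v : α → Prop) : (taut : PropForm α).eval v := fun h => h

lemma taut_mem_Cn (X : Set (PropForm α)) : (taut : PropForm α) ∈ Cn X :=
  fun v _ => eval_taut v

/-- A dummy normal default used to pad enumerations. -/
def dummyDefault : Default α := ⟨taut, {taut}, taut⟩

/-- The fair chain construction approximating an extension-candidate `A`. -/
noncomputable def chain (e : ℕ → Default α) (w : PropForm α) (A : Set (PropForm α)) :
    ℕ → PropForm α
  | 0 => w
  | n + 1 =>
      if (e (Nat.unpair n).1).pre ∈ Cn {chain e w A n} ∧ (e (Nat.unpair n).1).con ∈ A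
      then (chain e w A n).conj (e (Nat.unpair n).1).con
      else chain e w A n

lemma chain_succ (e : ℕ → Default α) (w : PropForm α) (A : Set (PropForm α)) (n : ℕ) :
    chain e w A (n + 1) =
      if (e (Nat.unpair n).1).pre ∈ Cn {chain e w A n} ∧ (e (Nat.unpair n).1).con ∈ A
      then (chain e w A n).conj (e (Nat.unpair n).1).con
      else chain e w A n := rfl

lemma chain_entail_succ (e : ℕ → Default α) (w : PropForm α) (A : Set (PropForm α)) (n : ℕ)
    (v : α → Prop) (h : (chain e w A (n + 1)).eval v) : (chain e w A n).eval v := by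
  rw [chain_succ] at h
  by_cases hc : (e (Nat.unpair n).1).pre ∈ Cn {chain e w A n} ∧ (e (Nat.unpair n).1).con ∈ A
  · rw [if_pos hc] at h; exact ((eval_conj v _ _).1 h).1
  · rwa [if_neg hc] at h

lemma chain_entail (e : ℕ → Default α) (w : PropForm α) (A : Set (PropForm α)) {m n : ℕ}
    (hmn : m ≤ n) (v : α → Prop) (h : (chain e w A n).eval v) : (chain e w A m).eval v := by
  induction n with
  | zero => rw [Nat.le_zero.1 hmn]; exact h
  | succ n ih =>
      rcases Nat.lt_or_ge m (n + 1) with h' | h'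
      · exact ih (Nat.lt_succ_iff.1 h') (chain_entail_succ e w A n v h)
      · rw [Nat.le_antisymm hmn h']; exact h

lemma chain_entail_w (e : ℕ → Default α) (w : PropForm α) (A : Set (PropForm α)) (n : ℕ)
    (v : α → Prop) (h : (chain e w A n).eval v) : w.eval v :=
  chain_entail e w A (Nat.zero_le n) v h

lemma Cn_chain_mono (e : ℕ → Default α) (w : PropForm α) (A : Set (PropForm α)) {m n : ℕ}
    (hmn : m ≤ n) : Cn {chain e w A m} ⊆ Cn {chain e w A n} := by
  intro φ hφ v hv
  exact hφ v (by simpa using chain_entail e w A hmn v (by simpa using hv _ rfl))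

variable {D : Set (Default α)} {W : Set (PropForm α)}

/-- P1: chain elements of an extension lie in the extension. -/
lemma chain_mem_self {e : ℕ → Default α} {w : PropForm α} {S : Set (PropForm α)}
    (hS : IsExtension D W S) (hw : w ∈ Cn W) (n : ℕ) : chain e w S n ∈ S := by
  induction n with
  | zero => exact extension_cnClosed hS (Cn_mono (extension_W_subset hS) hw)
  | succ n ih =>
      rw [chain_succ]
      by_cases hc : (e (Nat.unpair n).1).pre ∈ Cn {chain e w S n} ∧ (e (Nat.unpair n).1).con ∈ S
      · rw [if_pos hc]
        exact extension_cnClosed hS (conj_mem_Cn (mem_Cn_self ih) (mem_Cn_self hc.2))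
      · rwa [if_neg hc]

/-- The Good property: a chain element is either in an extension or inconsistent with it. -/
lemma chain_good (hD : ∀ d ∈ D, d.Normal) {e : ℕ → Default α}
    (he : ∀ i, e i ∈ D ∨ e i = dummyDefault) {w : PropForm α} (hw : w ∈ Cn W)
    (A : Set (PropForm α)) (n : ℕ) {S : Set (PropForm α)} (hS : IsExtension D W S) :
    chain e w A n ∈ S ∨ ¬ Sat (S ∪ {chain e w A n}) := by
  induction n with
  | zero => exact Or.inl (extension_cnClosed hS (Cn_mono (extension_W_subset hS) hw))
  | succ n ih =>
      rw [chain_succ]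
      by_cases hc : (e (Nat.unpair n).1).pre ∈ Cn {chain e w A n} ∧ (e (Nat.unpair n).1).con ∈ A
      swap
      · rwa [if_neg hc]
      rw [if_pos hc]
      set d := e (Nat.unpair n).1 with hd
      set h := chain e w A n with hh
      rcases ih with ih | ih
      swap
      · right
        intro ⟨v, hv⟩
        apply ih
        refine ⟨v, ?_⟩
        rintro φ (hφ | rfl)
        · exact hv φ (Set.mem_union_left _ hφ)
        · exact ((eval_conj v _ _).1 (hv _ (Set.mem_union_right _ rfl))).1
      by_cases hsat : Sat (S ∪ {h.conj d.con})
      swap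
      · exact Or.inr hsat
      left
      have hconS : d.con ∈ S := by
        rcases he (Nat.unpair n).1 with hdD | hdd
        · -- genuine default: apply extension closure
          rw [← hd] at hdD
          apply extension_rule_closed hS hdD
          · intro γ hγ
            rw [hD _ hdD, Finset.mem_singleton] at hγ
            subst hγ
            rw [neg_mem_Cn_iff, not_not]
            obtain ⟨v, hv⟩ := hsat
            refine ⟨v, ?_⟩
            rintro φ (hφ | rfl)
            · exact hv φ (Set.mem_union_left _ hφ)
            · exact ((eval_conj v _ _).1 (hv _ (Set.mem_union_right _ rfl))).2
          · exact extension_cnClosed hS (Cn_mono (Set.singleton_subset_iff.2 ih) hc.1)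
        · rw [hd, hdd]
          exact extension_cnClosed hS (taut_mem_Cn S)
      exact extension_cnClosed hS (conj_mem_Cn (mem_Cn_self ih) (mem_Cn_self hconS))

end Chain
section Grounded

open PropForm

attribute [local instance] Classical.propDecidable

variable {α : Type} {D : Set (Default α)} {W : Set (PropForm α)}

lemma Cn_subset_of_subset_Cn {X Y : Set (PropForm α)} (h : X ⊆ Cn Y) : Cn X ⊆ Cn Y := by
  intro φ hφ
  rw [← Cn_Cn Y]
  exact Cn_mono h hφ

/-- GP: chain elements are grounded: they belong to `CnRules` w.r.t. any satisfiable
closed superset. -/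
lemma chain_grounded (hD : ∀ d ∈ D, d.Normal) {e : ℕ → Default α}
    (he : ∀ i, e i ∈ D ∨ e i = dummyDefault) {w : PropForm α} (hw : w ∈ Cn W)
    (A : Set (PropForm α)) (n : ℕ) {T : Set (PropForm α)}
    (hsat : Sat T) (hcl : Cn T ⊆ T) (hmem : chain e w A n ∈ T) :
    chain e w A n ∈ CnRules (Reduct D T) W := by
  induction n with
  | zero => exact CnW_subset_CnRules _ _ hw
  | succ n ih =>
      rw [chain_succ] at hmem ⊢
      by_cases hc : (e (Nat.unpair n).1).pre ∈ Cn {chain e w A n} ∧ (e (Nat.unpair n).1).con ∈ A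
      swap
      · rw [if_neg hc] at hmem ⊢; exact ih hmem
      rw [if_pos hc] at hmem ⊢
      set d := e (Nat.unpair n).1 with hd
      set h := chain e w A n with hh
      have hhT : h ∈ T := by
        apply hcl
        refine Cn_mono (Set.singleton_subset_iff.2 hmem) ?_
        intro v hv
        exact ((eval_conj v _ _).1 (by simpa using hv _ rfl)).1
      have hconT : d.con ∈ T := by
        apply hcl
        refine Cn_mono (Set.singleton_subset_iff.2 hmem) ?_
        intro v hv
        exact ((eval_conj v _ _).1 (by simpa using hv _ rfl)).2
      have ihh := ih hhT
      have hconCR : d.con ∈ CnRules (Reduct D T) W := by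
        rcases he (Nat.unpair n).1 with hdD | hdd
        · rw [← hd] at hdD
          have happ : d.Applicable T := by
            intro γ hγ
            rw [hD _ hdD, Finset.mem_singleton] at hγ
            subst hγ
            rw [neg_mem_Cn_iff, not_not]
            exact Sat_mono (by intro x hx; rcases hx with hx | rfl; exacts [hx, hconT]) hsat
          refine (ruleClosed_CnRules _ _).2.2 (d.pre, d.con) ⟨d, hdD, happ, rfl⟩ ?_
          exact Cn_subset_CnRules _ _ (Cn_subset_of_subset_Cn
            (Set.singleton_subset_iff.2 (mem_Cn_self ihh)) hc.1)
        · rw [hd, hdd]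
          exact CnW_subset_CnRules _ _ (taut_mem_Cn W)
      exact Cn_subset_CnRules _ _ (conj_mem_Cn (mem_Cn_self ihh) (mem_Cn_self hconCR))

/-- P2: the chain of an extension axiomatizes it. -/
lemma Cn_range_chain [Denumerable α] (hD : ∀ d ∈ D, d.Normal) {e : ℕ → Default α}
    (heD : ∀ d ∈ D, ∃ i, e i = d) {w : PropForm α} (hw : w ∈ Cn W) (hWw : W ⊆ Cn {w})
    {S : Set (PropForm α)} (hS : IsExtension D W S) :
    Cn (Set.range (chain e w S)) = S := by
  have hrangeS : Set.range (chain e w S) ⊆ S := by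
    rintro _ ⟨n, rfl⟩; exact chain_mem_self hS hw n
  have hsub : Cn (Set.range (chain e w S)) ⊆ S := by
    intro φ hφ; exact extension_cnClosed hS (Cn_mono hrangeS hφ)
  refine Set.Subset.antisymm hsub ?_
  conv_lhs => rw [hS]
  apply CnRules_subset
  have hwmem : Cn {w} ⊆ Cn (Set.range (chain e w S)) :=
    Cn_mono (Set.singleton_subset_iff.2 (Set.mem_range.2 ⟨0, rfl⟩))
  refine ⟨fun φ hφ => hwmem (hWw hφ), (Cn_Cn _).le, ?_⟩
  rintro r ⟨d, hdD, happ, rfl⟩ hpre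
  simp only
  -- hpre : d.pre ∈ Cn (range chain)
  obtain ⟨X0, hX0sub, hX0fin, hX0⟩ := mem_Cn_finite hpre
  have hiU : Set.range (chain e w S) = ⋃ n, (fun k => chain e w S k) '' {k | k ≤ n} := by
    ext x
    simp only [Set.mem_range, Set.mem_iUnion, Set.mem_image, Set.mem_setOf_eq]
    constructor
    · rintro ⟨n, rfl⟩; exact ⟨n, n, le_rfl, rfl⟩
    · rintro ⟨n, k, _, rfl⟩; exact ⟨k, rfl⟩
  have hmono : Monotone (fun n => (fun k => chain e w S k) '' {k | k ≤ n}) := by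
    intro a b hab
    apply Set.image_mono
    intro k hk; exact le_trans hk hab
  obtain ⟨N, hN⟩ := finite_subset_iUnion_mono hmono hX0fin (hiU ▸ hX0sub)
  have hpreN : d.pre ∈ Cn {chain e w S N} := by
    apply Cn_subset_of_subset_Cn (Y := {chain e w S N}) ?_ hX0
    intro x hx
    obtain ⟨k, hk, rfl⟩ := hN hx
    intro v hv
    exact chain_entail e w S hk v (by simpa using hv _ rfl)
  have hpreS : d.pre ∈ S := hsub (Cn_mono (Set.singleton_subset_iff.2 (Set.mem_range.2 ⟨N, rfl⟩)) hpreN)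
  have hconS : d.con ∈ S := extension_rule_closed hS hdD happ hpreS
  obtain ⟨i, hi⟩ := heD d hdD
  set n := Nat.pair i N with hn
  have hNn : N ≤ n := Nat.right_le_pair i N
  have hguard : (e (Nat.unpair n).1).pre ∈ Cn {chain e w S n} ∧ (e (Nat.unpair n).1).con ∈ S := by
    rw [hn, Nat.unpair_pair, hi]
    exact ⟨Cn_chain_mono e w S hNn hpreN, hconS⟩
  have hstep : chain e w S (n + 1) = (chain e w S n).conj d.con := by
    rw [chain_succ, if_pos hguard]
    congr 1
    rw [hn, Nat.unpair_pair, hi]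
  have : d.con ∈ Cn {chain e w S (n + 1)} := by
    rw [hstep]
    intro v hv
    exact ((eval_conj v _ _).1 (by simpa using hv _ rfl)).2
  exact Cn_subset_of_subset_Cn (Set.singleton_subset_iff.2 (mem_Cn_self (Set.mem_range.2 ⟨n + 1, rfl⟩))) this

end Grounded
section Completion

open PropForm

attribute [local instance] Classical.propDecidable

variable {α : Type} {D : Set (Default α)} {W : Set (PropForm α)}

/-- Fair approximation sequence for building an extension above `X`. -/
noncomputable def approx (e : ℕ → Default α) (X : Set (PropForm α)) : ℕ → Set (PropForm α)
  | 0 => X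
  | n + 1 =>
      if (e (Nat.unpair n).1).pre ∈ Cn (approx e X n) ∧
          Sat (approx e X n ∪ {(e (Nat.unpair n).1).con})
      then approx e X n ∪ {(e (Nat.unpair n).1).con}
      else approx e X n

lemma approx_succ (e : ℕ → Default α) (X : Set (PropForm α)) (n : ℕ) :
    approx e X (n + 1) =
      if (e (Nat.unpair n).1).pre ∈ Cn (approx e X n) ∧
          Sat (approx e X n ∪ {(e (Nat.unpair n).1).con})
      then approx e X n ∪ {(e (Nat.unpair n).1).con}
      else approx e X n := rfl

lemma approx_mono (e : ℕ → Default α) (X : Set (PropForm α)) : Monotone (approx e X) := by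
  apply monotone_nat_of_le_succ
  intro n
  rw [approx_succ]
  by_cases hc : (e (Nat.unpair n).1).pre ∈ Cn (approx e X n) ∧
      Sat (approx e X n ∪ {(e (Nat.unpair n).1).con})
  · rw [if_pos hc]; exact Set.subset_union_left
  · rw [if_neg hc]

lemma approx_sat (e : ℕ → Default α) {X : Set (PropForm α)} (hX : Sat X) (n : ℕ) :
    Sat (approx e X n) := by
  induction n with
  | zero => exact hX
  | succ n ih =>
      rw [approx_succ]
      by_cases hc : (e (Nat.unpair n).1).pre ∈ Cn (approx e X n) ∧
          Sat (approx e X n ∪ {(e (Nat.unpair n).1).con})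
      · rw [if_pos hc]; exact hc.2
      · rwa [if_neg hc]

/-- Completion: any satisfiable grounded superset of `W` extends to an extension. -/
lemma completion [Denumerable α] (hD : ∀ d ∈ D, d.Normal) {e : ℕ → Default α}
    (he : ∀ i, e i ∈ D ∨ e i = dummyDefault) (heD : ∀ d ∈ D, ∃ i, e i = d)
    {X : Set (PropForm α)} (hXsat : Sat X) (hXW : W ⊆ X)
    (hground : ∀ T : Set (PropForm α), Sat T → Cn T ⊆ T → X ⊆ T →
      X ⊆ CnRules (Reduct D T) W) :
    ∃ S : Set (PropForm α), IsExtension D W S ∧ X ⊆ S := by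
  set U : Set (PropForm α) := ⋃ n, approx e X n with hU
  set S : Set (PropForm α) := Cn U with hSdef
  have happsub : ∀ n, approx e X n ⊆ S := fun n =>
    (Set.subset_iUnion (approx e X) n).trans (subset_Cn U)
  have hXS : X ⊆ S := happsub 0
  have hUsat : Sat U := by
    apply compactness
    intro Y hY hfin
    obtain ⟨N, hN⟩ := finite_subset_iUnion_mono (approx_mono e X) hfin hY
    exact Sat_mono hN (approx_sat e hXsat N)
  have hSsat : Sat S := Sat_Cn hUsat
  have hScl : Cn S ⊆ S := (Cn_Cn U).le
  refine ⟨S, ?_, hXS⟩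
  have hleft : CnRules (Reduct D S) W ⊆ S := by
    apply CnRules_subset
    refine ⟨hXW.trans hXS, hScl, ?_⟩
    rintro r ⟨d, hdD, happ, rfl⟩ hpre
    simp only
    obtain ⟨X0, hX0sub, hX0fin, hX0⟩ := mem_Cn_finite hpre
    obtain ⟨N, hN⟩ := finite_subset_iUnion_mono (approx_mono e X) hX0fin hX0sub
    have hpreN : d.pre ∈ Cn (approx e X N) :=
      Cn_subset_of_subset_Cn (hN.trans (subset_Cn _)) hX0
    obtain ⟨i, hi⟩ := heD d hdD
    set n := Nat.pair i N with hn
    have hNn : N ≤ n := Nat.right_le_pair i N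
    have hSatcon : Sat (S ∪ {d.con}) := by
      rw [← neg_notMem_Cn_iff]
      intro hneg
      exact happ d.con (by rw [hD d hdD]; exact Finset.mem_singleton_self _) hneg
    have hguard : (e (Nat.unpair n).1).pre ∈ Cn (approx e X n) ∧
        Sat (approx e X n ∪ {(e (Nat.unpair n).1).con}) := by
      rw [hn, Nat.unpair_pair, hi]
      constructor
      · exact Cn_mono (approx_mono e X hNn) hpreN
      · exact Sat_mono (Set.union_subset_union_left _ (happsub n)) hSatcon
    have : d.con ∈ approx e X (n + 1) := by
      rw [approx_succ, if_pos hguard, hn, Nat.unpair_pair, hi]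
      exact Set.mem_union_right _ rfl
    exact happsub (n + 1) this
  have hright : ∀ n, approx e X n ⊆ CnRules (Reduct D S) W := by
    intro n
    induction n with
    | zero => exact hground S hSsat hScl hXS
    | succ n ih =>
        rw [approx_succ]
        by_cases hc : (e (Nat.unpair n).1).pre ∈ Cn (approx e X n) ∧
            Sat (approx e X n ∪ {(e (Nat.unpair n).1).con})
        swap
        · rwa [if_neg hc]
        rw [if_pos hc]
        apply Set.union_subset ih
        rw [Set.singleton_subset_iff]
        set d := e (Nat.unpair n).1 with hd
        rcases he (Nat.unpair n).1 with hdD | hdd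
        · rw [← hd] at hdD
          have hconS : d.con ∈ S := by
            apply happsub (n + 1)
            rw [approx_succ, ← hd, if_pos hc]
            exact Set.mem_union_right _ rfl
          have happ : d.Applicable S := by
            intro γ hγ
            rw [hD _ hdD, Finset.mem_singleton] at hγ
            subst hγ
            rw [neg_mem_Cn_iff, not_not]
            exact Sat_mono (by intro x hx; rcases hx with hx | rfl; exacts [hx, hconS]) hSsat
          refine (ruleClosed_CnRules _ _).2.2 (d.pre, d.con) ⟨d, hdD, happ, rfl⟩ ?_
          exact Cn_subset_CnRules _ _ (Cn_subset_of_subset_Cn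
            (fun x hx => mem_Cn_self (ih hx)) hc.1)
        · rw [hd, hdd]
          exact CnW_subset_CnRules _ _ (taut_mem_Cn W)
  have : U ⊆ CnRules (Reduct D S) W := Set.iUnion_subset hright
  have hright' : S ⊆ CnRules (Reduct D S) W :=
    fun φ hφ => Cn_subset_CnRules _ _ (Cn_mono this hφ)
  exact Set.Subset.antisymm hright' hleft

end Completion
section Main

open PropForm

attribute [local instance] Classical.propDecidable

variable {α : Type}

/-- Characterization of `CnRules` for prerequisite-free normal default theories. -/
lemma CnRules_prereqFree (C : Set (PropForm α)) (S : Set (PropForm α)) :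
    CnRules (Reduct ((fun θ => (⟨taut, {θ}, θ⟩ : Default α)) '' C) S) ∅ =
      Cn {θ | θ ∈ C ∧ θ.neg ∉ Cn S} := by
  set A : Set (PropForm α) := {θ | θ ∈ C ∧ θ.neg ∉ Cn S} with hA
  set D' : Set (Default α) := (fun θ => (⟨taut, {θ}, θ⟩ : Default α)) '' C with hD'
  apply Set.Subset.antisymm
  · apply CnRules_subset
    refine ⟨Set.empty_subset _, (Cn_Cn _).le, ?_⟩
    rintro r ⟨d, ⟨θ, hθC, rfl⟩, happ, rfl⟩ _
    simp only
    apply mem_Cn_self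
    exact ⟨hθC, happ θ (Finset.mem_singleton_self θ)⟩
  · have hAsub : A ⊆ CnRules (Reduct D' S) ∅ := by
      rintro θ ⟨hθC, hθneg⟩
      have hrule : ((taut : PropForm α), θ) ∈ Reduct D' S := by
        refine ⟨⟨taut, {θ}, θ⟩, ⟨θ, hθC, rfl⟩, ?_, rfl⟩
        intro γ hγ
        rw [Finset.mem_singleton] at hγ
        subst hγ
        exact hθneg
      exact (ruleClosed_CnRules _ _).2.2 _ hrule
        (CnW_subset_CnRules _ _ (taut_mem_Cn ∅))
    intro φ hφ
    exact Cn_subset_CnRules _ _ (Cn_mono hAsub hφ)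

lemma Sat_Cn_empty : Sat (Cn (∅ : Set (PropForm α))) :=
  ⟨fun _ => True, fun φ hφ => hφ _ (by simp)⟩

end Main

/-- a normal default theory with consistent finite objective part is
equivalent to a prerequisite-free normal default theory with empty objective part. -/
theorem normal_finite_W_empty_objective {α : Type} [Denumerable α]
    (D : Set (Default α)) (W : Set (PropForm α))
    (hD : ∀ d ∈ D, d.Normal) (hW : Consistent W) (hWfin : W.Finite) :
    ∃ D' : Set (Default α), (∀ d ∈ D', d.Normal ∧ d.PrereqFree) ∧
      ext D' (∅ : Set (PropForm α)) = ext D W := by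
  classical
  have hWsat : Sat W := Consistent_iff_Sat.1 hW
  -- the conjunction of W
  set l : List (PropForm α) := hWfin.toFinset.toList with hl
  set w : PropForm α := conjList l with hwdef
  have hmem_l : ∀ φ : PropForm α, φ ∈ l ↔ φ ∈ W := by
    intro φ
    rw [hl, Finset.mem_toList, Set.Finite.mem_toFinset]
  have hwW : w ∈ Cn W := by
    intro v hv
    rw [hwdef, eval_conjList]
    intro φ hφ
    exact hv φ ((hmem_l φ).1 hφ)
  have hWw : W ⊆ Cn {w} := by
    intro φ hφ v hv
    have : w.eval v := by simpa using hv w rfl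
    rw [hwdef, eval_conjList] at this
    exact this φ ((hmem_l φ).2 hφ)
  -- a fair enumeration of D padded with the dummy default
  obtain ⟨e, hrange⟩ : ∃ e : ℕ → Default α, insert dummyDefault D = Set.range e := by
    apply Set.Countable.exists_eq_range (Set.to_countable _)
    exact ⟨dummyDefault, Set.mem_insert _ _⟩
  have he : ∀ i, e i ∈ D ∨ e i = dummyDefault := by
    intro i
    have : e i ∈ insert dummyDefault D := by rw [hrange]; exact Set.mem_range_self i
    rcases this with h | h
    · right; exact h
    · left; exact h
  have heD : ∀ d ∈ D, ∃ i, e i = d := by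
    intro d hd
    have : d ∈ insert dummyDefault D := Set.mem_insert_of_mem _ hd
    rw [hrange] at this
    obtain ⟨i, hi⟩ := this
    exact ⟨i, hi⟩
  -- the set of consequents and the new default theory
  set C : Set (PropForm α) := ⋃ S ∈ ext D W, Set.range (chain e w S) with hC
  set D' : Set (Default α) := (fun θ => (⟨taut, {θ}, θ⟩ : Default α)) '' C with hD'
  refine ⟨D', ?_, ?_⟩
  · rintro d ⟨θ, hθ, rfl⟩
    exact ⟨rfl, taut_mem_Cn ∅⟩
  apply Set.ext
  intro S
  simp only [ext, Set.mem_setOf_eq]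
  have hchar : CnRules (Reduct D' S) ∅ = Cn {θ | θ ∈ C ∧ θ.neg ∉ Cn S} :=
    CnRules_prereqFree C S
  set A : Set (PropForm α) := {θ | θ ∈ C ∧ θ.neg ∉ Cn S} with hA
  constructor
  · -- extension of (D', ∅) is an extension of (D, W)
    intro hS
    rw [IsExtension, hchar] at hS
    -- S is satisfiable
    have hSsat : Sat S := by
      by_contra hns
      have huniv : Cn S = Set.univ := Cn_eq_univ_iff.2 hns
      have hAempty : A = ∅ := by
        apply Set.eq_empty_iff_forall_notMem.2
        rintro θ ⟨_, hθ⟩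
        exact hθ (huniv ▸ Set.mem_univ _)
      rw [hAempty] at hS
      exact hns (hS ▸ Sat_Cn_empty)
    have hAS : A ⊆ S := fun θ hθ => hS ▸ mem_Cn_self hθ
    by_cases hex : ∃ S'' ∈ ext D W, Sat (S ∪ S'')
    · obtain ⟨S'', hS''ext, hSS''⟩ := hex
      have hS''isext : IsExtension D W S'' := hS''ext
      -- A ⊆ S''
      have hAS'' : A ⊆ S'' := by
        rintro θ ⟨hθC, hθneg⟩
        obtain ⟨S₀, hS₀, n, rfl⟩ : ∃ S₀, S₀ ∈ ext D W ∧ ∃ n, θ = chain e w S₀ n := by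
          rw [hC] at hθC
          simp only [Set.mem_iUnion, Set.mem_range] at hθC
          obtain ⟨S₀, hS₀, n, hn⟩ := hθC
          exact ⟨S₀, hS₀, n, hn.symm⟩
        rcases chain_good hD he hwW S₀ n hS''isext with h | h
        · exact h
        · exfalso
          apply h
          apply Sat_mono _ hSS''
          apply Set.union_subset Set.subset_union_right
          rw [Set.singleton_subset_iff]
          exact Set.mem_union_left _ (hAS ⟨hθC, hθneg⟩)
      -- range chain S'' ⊆ A
      have hrangeA : Set.range (chain e w S'') ⊆ A := by
        rintro _ ⟨n, rfl⟩
        constructor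
        · rw [hC]
          exact Set.mem_biUnion hS''ext (Set.mem_range_self n)
        · rw [neg_notMem_Cn_iff]
          apply Sat_mono _ hSS''
          apply Set.union_subset Set.subset_union_left
          rw [Set.singleton_subset_iff]
          exact Set.mem_union_right _ (chain_mem_self hS''isext hwW n)
      have h1 : S ⊆ S'' := by
        rw [hS]
        intro φ hφ
        exact extension_cnClosed hS''isext (Cn_mono hAS'' hφ)
      have h2 : S'' ⊆ S := by
        rw [hS]
        rw [← Cn_range_chain (W := W) hD heD hwW hWw hS''isext]
        exact Cn_mono hrangeA
      have : S = S'' := Set.Subset.antisymm h1 h2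
      rw [this]
      exact hS''isext
    · -- no extension of (D, W) is compatible with S: contradiction via completion
      exfalso
      push_neg at hex
      have hdecomp : ∀ θ ∈ A, ∃ S₀ n, S₀ ∈ ext D W ∧ θ = chain e w S₀ n := by
        rintro θ ⟨hθC, -⟩
        rw [hC] at hθC
        simp only [Set.mem_iUnion, Set.mem_range] at hθC
        obtain ⟨S₀, hS₀, n, hn⟩ := hθC
        exact ⟨S₀, n, hS₀, hn.symm⟩
      have hXsat : Sat (A ∪ W) := by
        rcases Set.eq_empty_or_nonempty A with hAe | ⟨θ0, hθ0⟩
        · rw [hAe, Set.empty_union]; exact hWsat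
        · obtain ⟨v, hv⟩ := hSsat
          refine ⟨v, ?_⟩
          rintro φ (hφ | hφW)
          · exact hv φ (hAS hφ)
          · obtain ⟨S₀, n, hS₀, hθ⟩ := hdecomp θ0 hθ0
            have hw_eval : w.eval v := by
              apply chain_entail_w e w S₀ n v
              rw [← hθ]
              exact hv θ0 (hAS hθ0)
            rw [hwdef, eval_conjList] at hw_eval
            exact hw_eval φ ((hmem_l φ).2 hφW)
      have hground : ∀ T : Set (PropForm α), Sat T → Cn T ⊆ T → (A ∪ W) ⊆ T →
          (A ∪ W) ⊆ CnRules (Reduct D T) W := by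
        intro T hTsat hTcl hsubT
        rintro θ (hθA | hθW)
        · obtain ⟨S₀, n, hS₀, hθ⟩ := hdecomp θ hθA
          rw [hθ]
          apply chain_grounded hD he hwW S₀ n hTsat hTcl
          rw [← hθ]
          exact hsubT (Set.mem_union_left _ hθA)
        · exact W_subset_CnRules _ _ hθW
      obtain ⟨Sstar, hSstarExt, hXSstar⟩ :=
        completion hD he heD hXsat Set.subset_union_right hground
      apply hex Sstar hSstarExt
      have hSsub : S ⊆ Sstar := by
        rw [hS]
        intro φ hφ
        apply extension_cnClosed hSstarExt
        apply Cn_mono _ hφ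
        intro θ hθ
        exact hXSstar (Set.mem_union_left _ hθ)
      apply Sat_mono _ (extension_sat hD hWsat hSstarExt)
      exact Set.union_subset hSsub (subset_refl _)
  · -- extension of (D, W) is an extension of (D', ∅)
    intro hS
    rw [IsExtension, hchar]
    apply Set.Subset.antisymm
    · rw [← Cn_range_chain (W := W) hD heD hwW hWw hS]
      apply Cn_mono
      rintro _ ⟨n, rfl⟩
      constructor
      · rw [hC]; exact Set.mem_biUnion hS (Set.mem_range_self n)
      · rw [neg_notMem_Cn_iff]
        apply Sat_mono _ (extension_sat hD hWsat hS)
        exact Set.union_subset (subset_refl S)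
          (Set.singleton_subset_iff.2 (chain_mem_self hS hwW n))
    · intro φ hφ
      apply extension_cnClosed hS
      apply Cn_mono _ hφ
      rintro θ ⟨hθC, hθneg⟩
      obtain ⟨S₀, hS₀, n, rfl⟩ : ∃ S₀, S₀ ∈ ext D W ∧ ∃ n, θ = chain e w S₀ n := by
        rw [hC] at hθC
        simp only [Set.mem_iUnion, Set.mem_range] at hθC
        obtain ⟨S₀, hS₀, n, hn⟩ := hθC
        exact ⟨S₀, hS₀, n, hn.symm⟩
      rcases chain_good hD he hwW S₀ n hS with h | h
      · exact h
      · exact absurd (neg_mem_Cn_iff.2 h) hθneg
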